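/- The sequence of ratios r ↦ ((r+1)·s_{r+1})/((n−r)·s_r), defined for integers 0 ≤ r < n, is non-increasing in r; that is, for all 0 ≤ r ≤ n−2, ((r+2)·s_{r+2})/((n−r−1)·s_{r+1}) ≤ ((r+1)·s_{r+1})/((n−r)·s_r) (equivalently, (n−r)(r+2)·s_{r+2}·s_r ≤ (n−r−1)(r+1)·s_{r+1}²). -/

import Mathlib

/-- The Hamming weight of `x ∈ Q = ∏ i, ℤ/q_iℤ`: the number of coordinates `i`
with `x i ≠ 0`. -/
def mwt {n : ℕ} {q : Fin n → ℕ} (x : ∀ i, ZMod (q i)) : ℕ :=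
  (Finset.univ.filter (fun i => x i ≠ 0)).card

/-- `sph q r` is `s_r`, the number of `x ∈ Q` with `wt(x) = r`. -/
noncomputable def sph {n : ℕ} (q : Fin n → ℕ) (r : ℕ) : ℕ :=
  Nat.card {x : ∀ i, ZMod (q i) // mwt x = r}

/-- `sphI q r I` is `s_r(I)`, the number of `x ∈ Q` with `wt(x) = r` and
`supp(x) ⊆ I`. -/
noncomputable def sphI {n : ℕ} (q : Fin n → ℕ) (r : ℕ) (I : Finset (Fin n)) : ℕ :=
  Nat.card {x : ∀ i, ZMod (q i) // mwt x = r ∧ ∀ i, x i ≠ 0 → i ∈ I}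


section NewtonAux

open Finset

variable {ι : Type*} [DecidableEq ι]


open Finset

variable {ι : Type*} [DecidableEq ι]

/-- Elementary symmetric sum. -/
noncomputable def Es (f : ι → ℝ) (s : Finset ι) (r : ℕ) : ℝ :=
  ∑ S ∈ s.powersetCard r, ∏ i ∈ S, f i

lemma Es_zero (f : ι → ℝ) (s : Finset ι) : Es f s 0 = 1 := by
  simp [Es]

lemma Es_of_card_lt (f : ι → ℝ) {s : Finset ι} {r : ℕ} (h : s.card < r) : Es f s r = 0 := by
  simp [Es, Finset.powersetCard_eq_empty.2 h]

lemma Es_insert {f : ι → ℝ} {a : ι} {s : Finset ι} (h : a ∉ s) (r : ℕ) :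
    Es f (insert a s) (r+1) = Es f s (r+1) + f a * Es f s r := by
  classical
  simp only [Es]
  rw [Finset.powersetCard_succ_insert h, Finset.sum_union]
  · congr 1
    rw [Finset.sum_image ?inj, Finset.mul_sum]
    case inj =>
      intro S hS T hT hST
      have haS : a ∉ S := fun hc => h ((Finset.mem_powersetCard.1 hS).1 hc)
      have haT : a ∉ T := fun hc => h ((Finset.mem_powersetCard.1 hT).1 hc)
      ext i
      constructor <;> intro hi
      · have : i ∈ insert a T := hST ▸ Finset.mem_insert_of_mem hi
        rcases Finset.mem_insert.1 this with rfl | h'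
        · exact absurd hi haS
        · exact h'
      · have : i ∈ insert a S := hST ▸ Finset.mem_insert_of_mem hi
        rcases Finset.mem_insert.1 this with rfl | h'
        · exact absurd hi haT
        · exact h'
    refine Finset.sum_congr rfl fun S hS => ?_
    have haS : a ∉ S := fun hc => h ((Finset.mem_powersetCard.1 hS).1 hc)
    rw [Finset.prod_insert haS]
  · rw [Finset.disjoint_left]
    intro S hS hS'
    have := (Finset.mem_powersetCard.1 hS).1
    rcases Finset.mem_image.1 hS' with ⟨T, hT, rfl⟩
    exact h (this (Finset.mem_insert_self a T))

lemma Es_nonneg {f : ι → ℝ} {s : Finset ι} (hf : ∀ i ∈ s, 0 ≤ f i) (r : ℕ) :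
    0 ≤ Es f s r := by
  refine Finset.sum_nonneg fun S hS => Finset.prod_nonneg fun i hi => ?_
  exact hf i ((Finset.mem_powersetCard.1 hS).1 hi)

lemma Es_pos {f : ι → ℝ} {s : Finset ι} (hf : ∀ i ∈ s, 0 < f i) {r : ℕ} (h : r ≤ s.card) :
    0 < Es f s r := by
  refine Finset.sum_pos (fun S hS => Finset.prod_pos fun i hi => hf i ((Finset.mem_powersetCard.1 hS).1 hi)) ?_
  exact Finset.powersetCard_nonempty.2 h

/-- Normalized elementary symmetric mean. -/
noncomputable def Pn (f : ι → ℝ) (s : Finset ι) (r : ℕ) : ℝ :=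
  Es f s r / (s.card.choose r : ℝ)

lemma Pn_zero (f : ι → ℝ) (s : Finset ι) : Pn f s 0 = 1 := by
  simp [Pn, Es_zero]

lemma Pn_nonneg {f : ι → ℝ} {s : Finset ι} (hf : ∀ i ∈ s, 0 ≤ f i) (r : ℕ) :
    0 ≤ Pn f s r :=
  div_nonneg (Es_nonneg hf r) (by positivity)

lemma Pn_pos {f : ι → ℝ} {s : Finset ι} (hf : ∀ i ∈ s, 0 < f i) {r : ℕ} (h : r ≤ s.card) :
    0 < Pn f s r :=
  div_pos (Es_pos hf h) (by exact_mod_cast Nat.choose_pos h)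

lemma Pn_eq_zero {s : Finset ι} (f : ι → ℝ) {r : ℕ} (h : s.card < r) : Pn f s r = 0 := by
  simp [Pn, Es_of_card_lt f h]

lemma idB (n r : ℕ) : ((r:ℝ)+1) * ((n+1).choose (r+1) : ℝ) = ((n:ℝ)+1) * (n.choose r : ℝ) := by
  have h := Nat.add_one_mul_choose_eq n r
  have h' : (((n+1) * n.choose r : ℕ) : ℝ) = (((n+1).choose (r+1) * (r+1) : ℕ) : ℝ) := by
    exact_mod_cast congrArg (Nat.cast (R := ℝ)) h
  push_cast at h'
  linarith

lemma idA (n r : ℕ) : ((n:ℝ) - r) * ((n+1).choose (r+1) : ℝ) = ((n:ℝ)+1) * (n.choose (r+1) : ℝ) := by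
  have hp : (((n+1).choose (r+1) : ℕ) : ℝ) = ((n.choose r : ℕ) : ℝ) + ((n.choose (r+1) : ℕ) : ℝ) := by
    exact_mod_cast congrArg (Nat.cast (R := ℝ)) (Nat.choose_succ_succ n r)
  have hb := idB n r
  linear_combination ((n:ℝ)+1) * hp - hb

lemma Pn_insert (f : ι → ℝ) {a : ι} {s : Finset ι} (h : a ∉ s) (r : ℕ) :
    ((s.card:ℝ)+1) * Pn f (insert a s) (r+1)
      = ((s.card:ℝ) - r) * Pn f s (r+1) + f a * ((r:ℝ)+1) * Pn f s r := by
  simp only [Pn, Es_insert h, Finset.card_insert_of_notMem h]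
  have T1 : ((s.card:ℝ)+1) * (Es f s (r+1) / ((s.card+1).choose (r+1) : ℝ))
      = ((s.card:ℝ) - r) * (Es f s (r+1) / (s.card.choose (r+1) : ℝ)) := by
    by_cases hr : r + 1 ≤ s.card
    · have c1 : (0:ℝ) < ((s.card+1).choose (r+1) : ℝ) := by
        exact_mod_cast Nat.choose_pos (by omega)
      have c2 : (0:ℝ) < (s.card.choose (r+1) : ℝ) := by
        exact_mod_cast Nat.choose_pos hr
      have ida := idA s.card r
      field_simp
      linear_combination (-(1:ℝ) * Es f s (r+1)) * ida
    · have hz : Es f s (r+1) = 0 := Es_of_card_lt f (by omega)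
      rw [hz]; simp
  have T2 : ((s.card:ℝ)+1) * ((f a * Es f s r) / ((s.card+1).choose (r+1) : ℝ))
      = f a * ((r:ℝ)+1) * (Es f s r / (s.card.choose r : ℝ)) := by
    by_cases hr : r ≤ s.card
    · have c1 : (0:ℝ) < ((s.card+1).choose (r+1) : ℝ) := by
        exact_mod_cast Nat.choose_pos (by omega)
      have c2 : (0:ℝ) < (s.card.choose r : ℝ) := by
        exact_mod_cast Nat.choose_pos hr
      have idb := idB s.card r
      field_simp
      linear_combination (-(1:ℝ) * f a * Es f s r) * idb
    · have hz : Es f s r = 0 := Es_of_card_lt f (by omega)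
      rw [hz]; simp
  calc ((s.card:ℝ)+1) * ((Es f s (r+1) + f a * Es f s r) / ((s.card+1).choose (r+1) : ℝ))
      = ((s.card:ℝ)+1) * (Es f s (r+1) / ((s.card+1).choose (r+1) : ℝ))
        + ((s.card:ℝ)+1) * ((f a * Es f s r) / ((s.card+1).choose (r+1) : ℝ)) := by ring
    _ = _ := by rw [T1, T2]

lemma core (m w a b c d e : ℝ) (hm : 0 < m) (hw : 0 ≤ w) (hwm : w + 2 ≤ m) (ha : 0 ≤ a)
    (hb : 0 ≤ b) (hc : 0 ≤ c) (hd : 0 ≤ d) (he : 0 ≤ e)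
    (hA : c*d ≤ b^2) (hB : b*e ≤ d^2) (hC : c*e ≤ b*d)
    (X Y Z : ℝ)
    (hX : m * X = (m - w)*b + a*w*c)
    (hY : m * Y = (m - w - 1)*d + a*(w+1)*b)
    (hZ : m * Z = (m - w - 2)*e + a*(w+2)*d) :
    X * Z ≤ Y^2 := by
  have t1 : 0 ≤ (m-w)*((m-w-2)*(d^2 - b*e)) :=
    mul_nonneg (by linarith) (mul_nonneg (by linarith) (by linarith))
  have t2 : 0 ≤ a*(w*((m-w-2)*(b*d - c*e))) :=
    mul_nonneg ha (mul_nonneg hw (mul_nonneg (by linarith) (by linarith)))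
  have t3 : 0 ≤ a^2*(w*((w+2)*(b^2 - c*d))) :=
    mul_nonneg (sq_nonneg a) (mul_nonneg hw (mul_nonneg (by linarith) (by linarith)))
  have t4 : 0 ≤ (d - a*b)^2 := sq_nonneg _
  have h2 : ((m-w)*b + a*w*c) * ((m-w-2)*e + a*(w+2)*d) ≤ ((m-w-1)*d + a*(w+1)*b)^2 := by
    nlinarith [t1, t2, t3, t4]
  have h3 : (m*X)*(m*Z) ≤ (m*Y)^2 := by rw [hX, hY, hZ]; exact h2
  have h4 : m^2*(X*Z) ≤ m^2*(Y^2) := by nlinarith [h3]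
  exact le_of_mul_le_mul_left h4 (by positivity)

lemma Pn_newton (f : ι → ℝ) : ∀ (s : Finset ι), (∀ i ∈ s, 0 < f i) → ∀ r,
    Pn f s r * Pn f s (r+2) ≤ Pn f s (r+1)^2 := by
  intro s
  induction s using Finset.cons_induction with
  | empty =>
    intro _ r
    have hz : Pn f (∅ : Finset ι) (r+2) = 0 := Pn_eq_zero f (by simp)
    rw [hz, mul_zero]; positivity
  | cons a s ha ih =>
    intro hf r
    simp only [Finset.cons_eq_insert] at hf ⊢
    have hfa : 0 < f a := hf a (Finset.mem_insert_self a s)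
    have hfs : ∀ i ∈ s, 0 < f i := fun i hi => hf i (Finset.mem_insert_of_mem hi)
    have hfs' : ∀ i ∈ s, 0 ≤ f i := fun i hi => (hfs i hi).le
    have hnn : ∀ k, 0 ≤ Pn f s k := fun k => Pn_nonneg hfs' k
    have hm : (0:ℝ) < (s.card:ℝ)+1 := by positivity
    by_cases hbig : r + 2 ≤ s.card + 1
    · rcases r with _ | v
      · -- r = 0
        refine core ((s.card:ℝ)+1) 0 (f a) (Pn f s 0) 0 (Pn f s 1) (Pn f s 2)
          hm le_rfl ?_ hfa.le (hnn 0) le_rfl (hnn 1) (hnn 2) ?_ (ih hfs 0) ?_ _ _ _ ?_ ?_ ?_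
        · have : (2:ℕ) ≤ s.card + 1 := hbig
          have : (2:ℝ) ≤ (s.card:ℝ)+1 := by exact_mod_cast this
          linarith
        · rw [Pn_zero]; nlinarith [hnn 1]
        · simpa using mul_nonneg (hnn 0) (hnn 1)
        · rw [Pn_zero, Pn_zero]; ring
        · have hstep := Pn_insert f ha 0
          push_cast at hstep ⊢
          linarith
        · have hstep := Pn_insert f ha 1
          push_cast at hstep ⊢
          linarith
      · -- r = v+1
        have hC : Pn f s v * Pn f s (v+3) ≤ Pn f s (v+1) * Pn f s (v+2) := by
          by_cases hv : v + 2 ≤ s.card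
          · have p1 : 0 < Pn f s (v+1) := Pn_pos hfs (by omega)
            have p2 : 0 < Pn f s (v+2) := Pn_pos hfs hv
            have hA' := ih hfs v
            have hB' := ih hfs (v+1)
            have hmul : (Pn f s v * Pn f s (v+2)) * (Pn f s (v+1) * Pn f s (v+3))
                ≤ Pn f s (v+1)^2 * Pn f s (v+2)^2 :=
              mul_le_mul hA' hB' (mul_nonneg (hnn (v+1)) (hnn (v+3)))
                (by positivity)
            have h9 : (Pn f s (v+1) * Pn f s (v+2)) * (Pn f s v * Pn f s (v+3))
                ≤ (Pn f s (v+1) * Pn f s (v+2)) * (Pn f s (v+1) * Pn f s (v+2)) := by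
              nlinarith [hmul]
            exact le_of_mul_le_mul_left h9 (mul_pos p1 p2)
          · have hz : Pn f s (v+3) = 0 := Pn_eq_zero f (by omega)
            rw [hz, mul_zero]
            exact mul_nonneg (hnn (v+1)) (hnn (v+2))
        refine core ((s.card:ℝ)+1) ((v:ℝ)+1) (f a) (Pn f s (v+1)) (Pn f s v)
          (Pn f s (v+2)) (Pn f s (v+3)) hm (by positivity) ?_ hfa.le
          (hnn (v+1)) (hnn v) (hnn (v+2)) (hnn (v+3)) (ih hfs v) (ih hfs (v+1)) hC
          _ _ _ ?_ ?_ ?_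
        · have : ((v+1) + 2 : ℕ) ≤ s.card + 1 := hbig
          have : (((v:ℕ)+1+2 : ℕ) : ℝ) ≤ ((s.card + 1 : ℕ) : ℝ) := by exact_mod_cast this
          push_cast at this
          linarith
        · have hstep := Pn_insert f ha v
          push_cast at hstep ⊢
          linarith
        · have hstep := Pn_insert f ha (v+1)
          push_cast at hstep ⊢
          linarith
        · have hstep := Pn_insert f ha (v+2)
          push_cast at hstep ⊢
          linarith
    · have hz : Pn f (insert a s) (r+2) = 0 := by
        apply Pn_eq_zero
        rw [Finset.card_insert_of_notMem ha]
        omega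
      rw [hz, mul_zero]; positivity

end NewtonAux

lemma sph_eq (n : ℕ) (q : Fin n → ℕ) (hq : ∀ i, 2 ≤ q i) (r : ℕ) :
    sph q r = ∑ S ∈ (Finset.univ : Finset (Fin n)).powersetCard r, ∏ i ∈ S, (q i - 1) := by
  haveI : ∀ i, NeZero (q i) := fun i => ⟨by have := hq i; omega⟩
  classical
  rw [sph, Nat.card_eq_fintype_card, Fintype.card_subtype]
  rw [Finset.card_eq_sum_card_fiberwise
    (f := fun x : ∀ i, ZMod (q i) => Finset.univ.filter (fun i => x i ≠ 0))
    (t := (Finset.univ : Finset (Fin n)).powersetCard r) ?ht]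
  case ht =>
    intro x hx
    rw [Finset.mem_coe, Finset.mem_powersetCard]
    exact ⟨Finset.subset_univ _, (Finset.mem_filter.1 (Finset.mem_coe.1 hx)).2⟩
  refine Finset.sum_congr rfl fun S hS => ?_
  have hScard : S.card = r := (Finset.mem_powersetCard.1 hS).2
  have hfilter : (Finset.univ.filter (fun x : ∀ i, ZMod (q i) => mwt x = r)).filter
      (fun x => Finset.univ.filter (fun i => x i ≠ 0) = S)
      = Fintype.piFinset (fun i => if i ∈ S then Finset.univ.erase (0 : ZMod (q i)) else {0}) := by
    ext x
    simp only [Finset.mem_filter, Finset.mem_univ, true_and, Fintype.mem_piFinset]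
    constructor
    · rintro ⟨-, hsupp⟩ i
      by_cases hi : i ∈ S
      · simp only [hi, if_true, Finset.mem_erase, Finset.mem_univ, and_true]
        have : i ∈ Finset.univ.filter (fun i => x i ≠ 0) := hsupp ▸ hi
        exact (Finset.mem_filter.1 this).2
      · simp only [hi, if_false, Finset.mem_singleton]
        by_contra hxi
        exact hi (hsupp ▸ Finset.mem_filter.2 ⟨Finset.mem_univ i, hxi⟩)
    · intro hx
      have hsupp : Finset.univ.filter (fun i => x i ≠ 0) = S := by
        ext i
        simp only [Finset.mem_filter, Finset.mem_univ, true_and]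
        have := hx i
        by_cases hi : i ∈ S
        · simp only [hi, if_true, Finset.mem_erase] at this
          simp [hi, this.1]
        · simp only [hi, if_false, Finset.mem_singleton] at this
          simp [hi, this]
      refine ⟨?_, hsupp⟩
      rw [mwt, hsupp, hScard]
  rw [hfilter, Fintype.card_piFinset]
  have hcard : ∀ i, (if i ∈ S then Finset.univ.erase (0 : ZMod (q i)) else {0}).card
      = if i ∈ S then q i - 1 else 1 := by
    intro i
    by_cases hi : i ∈ S
    · simp only [hi, if_true]
      rw [Finset.card_erase_of_mem (Finset.mem_univ _), Finset.card_univ, ZMod.card]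
    · simp [hi]
  rw [Finset.prod_congr rfl (fun i _ => hcard i), Finset.prod_ite_mem, Finset.univ_inter]

lemma sph_real (n : ℕ) (q : Fin n → ℕ) (hq : ∀ i, 2 ≤ q i) (r : ℕ) :
    ((sph q r : ℕ) : ℝ) = Es (fun i => (q i : ℝ) - 1) Finset.univ r := by
  rw [sph_eq n q hq r, Es, Nat.cast_sum]
  refine Finset.sum_congr rfl fun S _ => ?_
  rw [Nat.cast_prod]
  refine Finset.prod_congr rfl fun i _ => ?_
  rw [Nat.cast_sub (by have := hq i; omega)]
  norm_num

lemma final_step (nn rr s0 s1 s2 c0 c1 c2 : ℝ) (hs0 : 0 < s0) (hs1 : 0 < s1) (hs2 : 0 ≤ s2)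
    (hc0 : 0 < c0) (hc1 : 0 < c1) (hc2 : 0 < c2) (hrr : 0 ≤ rr) (hnr : 2 ≤ nn - rr)
    (hN : (s0/c0)*(s2/c2) ≤ (s1/c1)^2)
    (idA : (nn - rr)*c0 = (rr+1)*c1) (idB : ((nn-rr)-1)*c1 = (rr+2)*c2) :
    (rr+2)*s2 / (((nn-rr)-1)*s1) ≤ (rr+1)*s1 / ((nn-rr)*s0) := by
  rw [div_mul_div_comm, div_pow, div_le_div_iff₀ (by positivity) (by positivity)] at hN
  rw [div_le_div_iff₀ (by nlinarith) (by nlinarith)]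
  have h5 : (nn-rr)*(rr+2)*((s0*s2)*c1^2) ≤ (nn-rr)*(rr+2)*(s1^2*(c0*c2)) :=
    mul_le_mul_of_nonneg_left hN (by nlinarith)
  have h6 : (nn-rr)*(rr+2)*(s1^2*(c0*c2)) = ((rr+1)*((nn-rr)-1)*s1^2)*c1^2 := by
    linear_combination (s1^2*((rr+2)*c2))*idA - (s1^2*((rr+1)*c1))*idB
  have h7 : ((nn-rr)*(rr+2)*(s0*s2))*c1^2 ≤ ((rr+1)*((nn-rr)-1)*s1^2)*c1^2 := by
    nlinarith [h5, h6]
  have h8 := le_of_mul_le_mul_right h7 (by positivity : (0:ℝ) < c1^2)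
  nlinarith [h8]

/-- The ratio `((r+1) s_{r+1}) / ((n-r) s_r)` is non-increasing in `r`:
for `0 ≤ r ≤ n - 2`,
`((r+2) s_{r+2}) / ((n-r-1) s_{r+1}) ≤ ((r+1) s_{r+1}) / ((n-r) s_r)`. -/
theorem stmt4 (n : ℕ) (hn : 1 ≤ n) (q : Fin n → ℕ) (hq : ∀ i, 2 ≤ q i)
    (r : ℕ) (hr : r + 2 ≤ n) :
    ((r : ℝ) + 2) * sph q (r + 2) / ((((n : ℝ) - r) - 1) * sph q (r + 1))
      ≤ ((r : ℝ) + 1) * sph q (r + 1) / (((n : ℝ) - r) * sph q r) := by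
  classical
  have hf : ∀ i ∈ (Finset.univ : Finset (Fin n)), 0 < (fun i => (q i : ℝ) - 1) i := by
    intro i _
    have : (2:ℝ) ≤ (q i : ℝ) := by exact_mod_cast hq i
    simp only
    linarith
  have hcardu : (Finset.univ : Finset (Fin n)).card = n := by simp
  have hrn : r ≤ n := by omega
  have hr1n : r + 1 ≤ n := by omega
  have hs0 : (0:ℝ) < ((sph q r : ℕ) : ℝ) := by
    rw [sph_real n q hq r]; exact Es_pos hf (by rw [hcardu]; omega)
  have hs1 : (0:ℝ) < ((sph q (r+1) : ℕ) : ℝ) := by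
    rw [sph_real n q hq (r+1)]; exact Es_pos hf (by rw [hcardu]; omega)
  have hs2 : (0:ℝ) ≤ ((sph q (r+2) : ℕ) : ℝ) := by positivity
  have hc0 : (0:ℝ) < (n.choose r : ℝ) := by exact_mod_cast Nat.choose_pos hrn
  have hc1 : (0:ℝ) < (n.choose (r+1) : ℝ) := by exact_mod_cast Nat.choose_pos hr1n
  have hc2 : (0:ℝ) < (n.choose (r+2) : ℝ) := by exact_mod_cast Nat.choose_pos hr
  have hnr : (2:ℝ) ≤ (n:ℝ) - r := by
    have : ((r + 2 : ℕ) : ℝ) ≤ (n : ℝ) := by exact_mod_cast hr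
    push_cast at this
    linarith
  have hN := Pn_newton (fun i => (q i : ℝ) - 1) Finset.univ hf r
  simp only [Pn, hcardu] at hN
  rw [← sph_real n q hq r, ← sph_real n q hq (r+1), ← sph_real n q hq (r+2)] at hN
  have idA : ((n:ℝ) - r) * (n.choose r : ℝ) = ((r:ℝ)+1) * (n.choose (r+1) : ℝ) := by
    have h := Nat.choose_succ_right_eq n r
    have h' : ((n.choose (r+1) * (r+1) : ℕ) : ℝ) = ((n.choose r * (n - r) : ℕ) : ℝ) := by
      exact_mod_cast congrArg (Nat.cast (R := ℝ)) h
    push_cast [Nat.cast_sub hrn] at h'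
    linarith
  have idB : (((n:ℝ) - r) - 1) * (n.choose (r+1) : ℝ) = ((r:ℝ)+2) * (n.choose (r+2) : ℝ) := by
    have h := Nat.choose_succ_right_eq n (r+1)
    have h' : ((n.choose (r+2) * (r+2) : ℕ) : ℝ) = ((n.choose (r+1) * (n - (r+1)) : ℕ) : ℝ) := by
      exact_mod_cast congrArg (Nat.cast (R := ℝ)) h
    push_cast [Nat.cast_sub hr1n] at h'
    linarith
  exact final_step (n:ℝ) (r:ℝ) _ _ _ _ _ _ hs0 hs1 hs2 hc0 hc1 hc2 (by positivity) hnr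
    hN idA idB
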